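/- (Equivalence of static and first-order rigidity.) Let (G, p) be a framework in ℝ³ with p not collinear. Then the span of the bar loads of (G, p) equals the space of equilibrium loads on (V, p) (static rigidity) if and only if every infinitesimal motion of (G, p) is a trivial motion (first-order rigidity). -/

import Mathlib

open Matrix

/-- The space of equilibrium loads on a finite configuration `p : V → ℝ³`. -/
def eqLoads (V : Type*) [Fintype V] (p : V → Fin 3 → ℝ) :
    Submodule ℝ (V → Fin 3 → ℝ) where
  carrier := {f | (∑ i, f i) = 0 ∧ (∑ i, (p i) ⨯₃ (f i)) = 0}
  zero_mem' := by simp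
  add_mem' := by
    rintro f g ⟨hf1, hf2⟩ ⟨hg1, hg2⟩
    constructor
    · simp only [Pi.add_apply, Finset.sum_add_distrib, hf1, hg1, add_zero]
    · simp only [Pi.add_apply, map_add, Finset.sum_add_distrib, hf2, hg2, add_zero]
  smul_mem' := by
    rintro c f ⟨hf1, hf2⟩
    constructor
    · simp only [Pi.smul_apply, ← Finset.smul_sum, hf1, smul_zero]
    · simp only [Pi.smul_apply, _root_.map_smul, ← Finset.smul_sum, hf2, smul_zero]

/-- The bar load of the edge `{i, j}`. -/
def barLoad {V : Type*} [DecidableEq V] (p : V → Fin 3 → ℝ) : Sym2 V → (V → Fin 3 → ℝ) :=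
  Sym2.lift ⟨fun i j k => if k = i then p i - p j else if k = j then p j - p i else 0,
    by
      intro i j
      funext k
      by_cases hi : k = i <;> by_cases hj : k = j <;> simp_all⟩

/-- The space of infinitesimal motions of the framework `(G, p)`. -/
def motionSpace {V : Type*} (G : SimpleGraph V) (p : V → Fin 3 → ℝ) :
    Submodule ℝ (V → Fin 3 → ℝ) where
  carrier := {v | ∀ i j : V, G.Adj i j → (p i - p j) ⬝ᵥ (v i - v j) = 0}
  zero_mem' := by simp
  add_mem' := by
    intro f g hf hg i j hij
    have h : (f + g) i - (f + g) j = (f i - f j) + (g i - g j) := by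
      simp only [Pi.add_apply]; abel
    rw [h, dotProduct_add, hf i j hij, hg i j hij, add_zero]
  smul_mem' := by
    intro c f hf i j hij
    have h : (c • f) i - (c • f) j = c • (f i - f j) := by
      simp only [Pi.smul_apply, smul_sub]
    rw [h, dotProduct_smul, hf i j hij, smul_zero]

/-- The space of trivial motions of the configuration `p`: maps `i ↦ t + ω ×₃ (p i)`. -/
def trivialMotions (V : Type*) (p : V → Fin 3 → ℝ) : Submodule ℝ (V → Fin 3 → ℝ) where
  carrier := {v | ∃ t ω : Fin 3 → ℝ, v = fun i => t + ω ⨯₃ (p i)}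
  zero_mem' := ⟨0, 0, by funext i; simp⟩
  add_mem' := by
    rintro f g ⟨t₁, ω₁, rfl⟩ ⟨t₂, ω₂, rfl⟩
    exact ⟨t₁ + t₂, ω₁ + ω₂, by
      funext i
      simp only [Pi.add_apply, map_add, LinearMap.add_apply]
      abel⟩
  smul_mem' := by
    rintro c f ⟨t, ω, rfl⟩
    exact ⟨c • t, c • ω, by
      funext i
      simp only [Pi.smul_apply, _root_.map_smul, LinearMap.smul_apply, smul_add]⟩


section RigidityAux

variable {V : Type*} [Fintype V] [DecidableEq V]

/-- The standard linear equivalence with Euclidean space. -/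
noncomputable def rigidEqv (V : Type*) : (V → Fin 3 → ℝ) ≃ₗ[ℝ] EuclideanSpace ℝ (V × Fin 3) where
  toFun f := WithLp.toLp 2 (fun x => f x.1 x.2)
  map_add' _ _ := rfl
  map_smul' _ _ := rfl
  invFun g := fun i k => g (i, k)
  left_inv _ := rfl
  right_inv _ := rfl

omit [Fintype V] [DecidableEq V] in
@[simp] lemma rigidEqv_apply (f : V → Fin 3 → ℝ) (x : V × Fin 3) :
    rigidEqv V f x = f x.1 x.2 := rfl

omit [DecidableEq V] in
lemma inner_rigidEqv (f g : V → Fin 3 → ℝ) :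
    (inner ℝ (rigidEqv V f) (rigidEqv V g)) = ∑ i, f i ⬝ᵥ g i := by
  simp [PiLp.inner_apply, RCLike.inner_apply, dotProduct, Fintype.sum_prod_type, mul_comm]

lemma mem_orthogonal_span_iff {E : Type*} [NormedAddCommGroup E] [InnerProductSpace ℝ E]
    {A : Set E} {x : E} :
    x ∈ (Submodule.span ℝ A)ᗮ ↔ ∀ a ∈ A, (inner ℝ a x) = 0 := by
  rw [Submodule.mem_orthogonal]
  constructor
  · exact fun h a ha => h a (Submodule.subset_span ha)
  · intro h y hy
    induction hy using Submodule.span_induction with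
    | mem a ha => exact h a ha
    | zero => simp
    | add a b _ _ ha hb => rw [inner_add_left, ha, hb, add_zero]
    | smul c a _ ha => rw [inner_smul_left, ha, mul_zero]

lemma sum_support_pair {M : Type*} [AddCommMonoid M] {i j : V} (h : i ≠ j) (f : V → M)
    (hf : ∀ k, k ≠ i → k ≠ j → f k = 0) : ∑ k, f k = f i + f j := by
  rw [← Finset.sum_subset (Finset.subset_univ ({i, j} : Finset V))
    (fun x _ hx => by
      simp only [Finset.mem_insert, Finset.mem_singleton, not_or] at hx
      exact hf x hx.1 hx.2), Finset.sum_pair h]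

omit [DecidableEq V] in
lemma dot_sum_swap (t : Fin 3 → ℝ) (f : V → Fin 3 → ℝ) :
    ∑ i, t ⬝ᵥ f i = t ⬝ᵥ ∑ i, f i := by
  simp only [dotProduct, Finset.sum_apply, Finset.mul_sum]
  rw [Finset.sum_comm]

omit [Fintype V] in
lemma barLoad_apply (p : V → Fin 3 → ℝ) (i j k : V) :
    barLoad p s(i, j) k = if k = i then p i - p j else if k = j then p j - p i else 0 := by
  simp [barLoad]

lemma barLoad_mem_eqLoads (p : V → Fin 3 → ℝ) {i j : V} (h : i ≠ j) :
    barLoad p s(i, j) ∈ eqLoads V p := by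
  show _ ∧ _
  constructor
  · rw [sum_support_pair h _ (fun k hki hkj => by simp [barLoad_apply, hki, hkj])]
    simp [barLoad_apply, h, h.symm, sub_add_sub_cancel']
  · rw [sum_support_pair h _ (fun k hki hkj => by simp [barLoad_apply, hki, hkj]),
      barLoad_apply, barLoad_apply, if_pos rfl, if_neg h.symm, if_pos rfl]
    simp only [map_sub, cross_self, zero_sub]
    rw [cross_anticomm (p i) (p j)]
    abel

lemma inner_barLoad (p v : V → Fin 3 → ℝ) {i j : V} (h : i ≠ j) :
    (inner ℝ (rigidEqv V (barLoad p s(i, j))) (rigidEqv V v))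
      = (p i - p j) ⬝ᵥ (v i - v j) := by
  rw [inner_rigidEqv,
    sum_support_pair h _ (fun k hki hkj => by simp [barLoad_apply, hki, hkj]),
    barLoad_apply, barLoad_apply, if_pos rfl, if_neg h.symm, if_pos rfl]
  simp only [sub_dotProduct, dotProduct_sub]
  ring

lemma mem_map_rigidEqv {K : Submodule ℝ (V → Fin 3 → ℝ)} {v : V → Fin 3 → ℝ} :
    rigidEqv V v ∈ K.map (rigidEqv V).toLinearMap ↔ v ∈ K := by
  rw [Submodule.mem_map]
  constructor
  · rintro ⟨w, hw, hew⟩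
    rwa [← (rigidEqv V).injective hew]
  · exact fun hv => ⟨v, hv, rfl⟩

lemma motion_iff (G : SimpleGraph V) (p v : V → Fin 3 → ℝ) :
    v ∈ motionSpace G p ↔
      rigidEqv V v ∈
        ((Submodule.span ℝ (barLoad p '' G.edgeSet)).map (rigidEqv V).toLinearMap)ᗮ := by
  rw [Submodule.map_span, mem_orthogonal_span_iff]
  constructor
  · rintro hv a ⟨w, ⟨s, hs, rfl⟩, rfl⟩
    revert hs
    induction s using Sym2.ind with
    | _ i j =>
      intro hs
      rw [SimpleGraph.mem_edgeSet] at hs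
      show (inner ℝ (rigidEqv V (barLoad p s(i, j))) (rigidEqv V v)) = 0
      rw [inner_barLoad _ _ hs.ne]
      exact hv i j hs
  · intro h i j hij
    have := h (rigidEqv V (barLoad p s(i, j)))
      ⟨barLoad p s(i, j), ⟨s(i, j), (SimpleGraph.mem_edgeSet _).2 hij, rfl⟩, rfl⟩
    rw [← inner_barLoad p v hij.ne]
    exact this

lemma eqLoad_iff (p f : V → Fin 3 → ℝ) :
    f ∈ eqLoads V p ↔
      rigidEqv V f ∈ ((trivialMotions V p).map (rigidEqv V).toLinearMap)ᗮ := by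
  have expand : ∀ t ω : Fin 3 → ℝ,
      (inner ℝ (rigidEqv V (fun i => t + ω ⨯₃ p i)) (rigidEqv V f))
        = t ⬝ᵥ (∑ i, f i) + ω ⬝ᵥ (∑ i, p i ⨯₃ f i) := by
    intro t ω
    rw [inner_rigidEqv]
    have h1 : ∀ i, (t + ω ⨯₃ p i) ⬝ᵥ f i = t ⬝ᵥ f i + ω ⬝ᵥ (p i ⨯₃ f i) := by
      intro i
      rw [add_dotProduct]
      congr 1
      rw [dotProduct_comm, triple_product_permutation]
    simp_rw [h1]
    rw [Finset.sum_add_distrib, dot_sum_swap, dot_sum_swap]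
  rw [Submodule.mem_orthogonal]
  constructor
  · rintro (⟨h1, h2⟩ : _ ∧ _) y hy
    rw [Submodule.mem_map] at hy
    obtain ⟨w, ⟨t, ω, rfl⟩, rfl⟩ := hy
    rw [LinearEquiv.coe_coe, expand, h1, h2, dotProduct_zero, dotProduct_zero, add_zero]
  · intro h
    have key : ∀ t ω : Fin 3 → ℝ, t ⬝ᵥ (∑ i, f i) + ω ⬝ᵥ (∑ i, p i ⨯₃ f i) = 0 := by
      intro t ω
      rw [← expand t ω]
      exact h _ ⟨fun i => t + ω ⨯₃ p i, ⟨t, ω, rfl⟩, rfl⟩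
    show _ ∧ _
    constructor
    · have := key (∑ i, f i) 0
      rw [zero_dotProduct, add_zero, dotProduct_self_eq_zero] at this
      exact this
    · have := key 0 (∑ i, p i ⨯₃ f i)
      rw [zero_dotProduct, zero_add, dotProduct_self_eq_zero] at this
      exact this

end RigidityAux

/-- Equivalence of static and first-order rigidity: for a framework `(G, p)` with `p` not
collinear, the bar loads span the space of equilibrium loads iff every infinitesimal
motion is a trivial motion. -/
theorem staticRigid_iff_firstOrderRigid {V : Type*} [Fintype V] [DecidableEq V]
    (G : SimpleGraph V) [DecidableRel G.Adj] (p : V → Fin 3 → ℝ)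
    (hframe : ∀ i j : V, G.Adj i j → p i ≠ p j)
    (hp : ∃ i j k : V, AffineIndependent ℝ ![p i, p j, p k]) :
    Submodule.span ℝ (barLoad p '' G.edgeSet) = eqLoads V p ↔
      motionSpace G p ≤ trivialMotions V p := by
  have hinj : Function.Injective (rigidEqv V).toLinearMap := (rigidEqv V).injective
  set S := (Submodule.span ℝ (barLoad p '' G.edgeSet)).map (rigidEqv V).toLinearMap with hS
  set E := (eqLoads V p).map (rigidEqv V).toLinearMap with hE
  set M := (motionSpace G p).map (rigidEqv V).toLinearMap with hM
  set T := (trivialMotions V p).map (rigidEqv V).toLinearMap with hT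
  have hMS : M = Sᗮ := by
    ext x
    obtain ⟨v, rfl⟩ := (rigidEqv V).surjective x
    rw [hM, mem_map_rigidEqv, motion_iff]
  have hET : E = Tᗮ := by
    ext x
    obtain ⟨f, rfl⟩ := (rigidEqv V).surjective x
    rw [hE, mem_map_rigidEqv, eqLoad_iff]
  have hSE : S ≤ E := by
    apply Submodule.map_mono
    rw [Submodule.span_le]
    rintro a ⟨s, hs, rfl⟩
    revert hs
    induction s using Sym2.ind with
    | _ i j =>
      intro hs
      rw [SimpleGraph.mem_edgeSet] at hs
      exact barLoad_mem_eqLoads p hs.ne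
  rw [← Submodule.map_injective_of_injective hinj |>.eq_iff (a := Submodule.span ℝ (barLoad p '' G.edgeSet)) (b := eqLoads V p),
    ← Submodule.map_le_map_iff_of_injective hinj, ← hS, ← hE, ← hM, ← hT]
  constructor
  · intro h
    rw [hMS, h, hET, Submodule.orthogonal_orthogonal]
  · intro h
    refine le_antisymm hSE ?_
    rw [hET]
    calc Tᗮ ≤ (Sᗮ)ᗮ := Submodule.orthogonal_le (hMS ▸ h)
    _ = S := Submodule.orthogonal_orthogonal S
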